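/- For every integer n ≥ 1 and all real numbers α, β with 0 ≤ β < α ≤ 1, the square root factorization holds: C_{α,β} · C_{α,β} = A_{α,β}. -/

import Mathlib

open Finset Matrix

/-- `r_m = (1/4^m)·C(2m,m)`. -/
noncomputable def rCoef (m : ℕ) : ℝ := (1 / 4 ^ m) * (Nat.choose (2 * m) m : ℝ)

/-- `a_m = Σ_{t=0}^{m} α^t β^{m−t}`. -/
noncomputable def aCoef (α β : ℝ) (m : ℕ) : ℝ :=
  ∑ t ∈ Finset.range (m + 1), α ^ t * β ^ (m - t)

/-- `c_m = Σ_{i=0}^{m} α^{m−i} r_{m−i} r_i β^i`. -/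
noncomputable def cCoef (α β : ℝ) (m : ℕ) : ℝ :=
  ∑ i ∈ Finset.range (m + 1), α ^ (m - i) * rCoef (m - i) * rCoef i * β ^ i

/-- The SGD workload matrix `A_{α,β}`. -/
noncomputable def Amat (n : ℕ) (α β : ℝ) : Matrix (Fin n) (Fin n) ℝ :=
  Matrix.of fun i j => if (j : ℕ) ≤ (i : ℕ) then aCoef α β ((i : ℕ) - (j : ℕ)) else 0

/-- The square root factor `C_{α,β}`, lower triangular Toeplitz with entries `c_{i-j}`. -/
noncomputable def Cmat (n : ℕ) (α β : ℝ) : Matrix (Fin n) (Fin n) ℝ :=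
  Matrix.of fun i j => if (j : ℕ) ≤ (i : ℕ) then cCoef α β ((i : ℕ) - (j : ℕ)) else 0

lemma rCoef_zero : rCoef 0 = 1 := by simp [rCoef]

lemma r_rec (i : ℕ) : 2 * ((i : ℝ) + 1) * rCoef (i + 1) = (2 * i + 1) * rCoef i := by
  have h := Nat.succ_mul_centralBinom_succ i
  have h' : ((i : ℝ) + 1) * (Nat.choose (2 * (i + 1)) (i + 1) : ℝ)
      = 2 * (2 * i + 1) * (Nat.choose (2 * i) i : ℝ) := by
    exact_mod_cast congrArg (Nat.cast : ℕ → ℝ) h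
  have h4 : (4 : ℝ) ^ (i + 1) = 4 ^ i * 4 := pow_succ 4 i
  have h4ne : (4 : ℝ) ^ i ≠ 0 := by positivity
  unfold rCoef
  rw [h4]
  field_simp
  linear_combination 2 * h'

noncomputable def T (m : ℕ) : ℝ := ∑ i ∈ range (m + 1), rCoef i * rCoef (m - i)

lemma weighted (m : ℕ) :
    2 * (∑ i ∈ range (m + 1), (i : ℝ) * (rCoef i * rCoef (m - i))) = m * T m := by
  have hrefl : ∑ i ∈ range (m + 1), (i : ℝ) * (rCoef i * rCoef (m - i))
      = ∑ i ∈ range (m + 1), ((m - i : ℕ) : ℝ) * (rCoef (m - i) * rCoef i) := by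
    rw [← Finset.sum_range_reflect (fun i => ((m - i : ℕ) : ℝ) * (rCoef (m - i) * rCoef i)) (m + 1)]
    refine Finset.sum_congr rfl fun i hi => ?_
    have hi' : i ≤ m := Nat.lt_succ_iff.mp (Finset.mem_range.mp hi)
    have : m + 1 - 1 - i = m - i := by omega
    rw [this, Nat.sub_sub_self hi']
  rw [two_mul]
  nth_rewrite 2 [hrefl]
  rw [T, ← Finset.sum_add_distrib, Finset.mul_sum]
  refine Finset.sum_congr rfl fun i hi => ?_
  have hi' : i ≤ m := Nat.lt_succ_iff.mp (Finset.mem_range.mp hi)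
  have hc : ((m - i : ℕ) : ℝ) = (m : ℝ) - i := by
    push_cast [Nat.cast_sub hi']; ring
  rw [hc]; ring

lemma T_eq_one (m : ℕ) : T m = 1 := by
  induction m with
  | zero => simp [T, rCoef_zero]
  | succ m ih =>
    -- U := ∑ i in range (m+1), (i+1) * (rCoef (i+1) * rCoef (m-i))
    have hU1 : ∑ i ∈ range (m + 1), ((i : ℝ) + 1) * (rCoef (i + 1) * rCoef (m - i))
        = ((m : ℝ) + 1) / 2 * T m := by
      have : ∀ i ∈ range (m + 1), ((i : ℝ) + 1) * (rCoef (i + 1) * rCoef (m - i))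
          = ((i : ℝ) + 1 / 2) * (rCoef i * rCoef (m - i)) := by
        intro i _
        linear_combination (rCoef (m - i) / 2) * r_rec i
      rw [Finset.sum_congr rfl this]
      have hsplit : ∑ i ∈ range (m + 1), ((i : ℝ) + 1 / 2) * (rCoef i * rCoef (m - i))
          = (∑ i ∈ range (m + 1), (i : ℝ) * (rCoef i * rCoef (m - i))) + (1 / 2) * T m := by
        rw [T, Finset.mul_sum, ← Finset.sum_add_distrib]
        exact Finset.sum_congr rfl fun i _ => by ring
      rw [hsplit]
      have hw := weighted m
      linarith
    have hU2 : ∑ i ∈ range (m + 1), ((i : ℝ) + 1) * (rCoef (i + 1) * rCoef (m - i))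
        = ∑ j ∈ range (m + 2), (j : ℝ) * (rCoef j * rCoef (m + 1 - j)) := by
      rw [Finset.sum_range_succ' (fun j => (j : ℝ) * (rCoef j * rCoef (m + 1 - j))) (m + 1)]
      simp only [Nat.cast_zero, zero_mul, add_zero]
      refine Finset.sum_congr rfl fun i _ => ?_
      have : m + 1 - (i + 1) = m - i := by omega
      push_cast [this]
      ring
    have hw := weighted (m + 1)
    rw [← hU2, hU1] at hw
    push_cast at hw
    have hm : (m : ℝ) + 1 ≠ 0 := by positivity
    have : ((m : ℝ) + 1) * T (m + 1) = ((m : ℝ) + 1) * T m := by linarith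
    have := mul_left_cancel₀ hm this
    rw [this, ih]


noncomputable def rp (γ : ℝ) : PowerSeries ℝ := PowerSeries.mk fun m => γ ^ m * rCoef m

lemma rp_sq (γ : ℝ) : rp γ * rp γ = PowerSeries.mk fun m => γ ^ m := by
  ext m
  rw [PowerSeries.coeff_mul, Finset.Nat.sum_antidiagonal_eq_sum_range_succ_mk]
  simp only [rp, PowerSeries.coeff_mk]
  have : ∀ k ∈ range (m + 1),
      γ ^ k * rCoef k * (γ ^ (m - k) * rCoef (m - k)) = γ ^ m * (rCoef k * rCoef (m - k)) := by
    intro k hk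
    have hk' : k ≤ m := Nat.lt_succ_iff.mp (Finset.mem_range.mp hk)
    rw [show γ ^ m = γ ^ k * γ ^ (m - k) by rw [← pow_add, Nat.add_sub_cancel' hk']]
    ring
  rw [Finset.sum_congr rfl this, ← Finset.mul_sum, ← T, T_eq_one, mul_one]

lemma cps (α β : ℝ) : PowerSeries.mk (cCoef α β) = rp α * rp β := by
  ext m
  rw [PowerSeries.coeff_mul, Finset.Nat.sum_antidiagonal_eq_sum_range_succ_mk]
  simp only [rp, PowerSeries.coeff_mk, cCoef]
  rw [← Finset.sum_range_reflect (fun i => α ^ (m - i) * rCoef (m - i) * rCoef i * β ^ i) (m + 1)]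
  refine Finset.sum_congr rfl fun k hk => ?_
  have hk' : k ≤ m := Nat.lt_succ_iff.mp (Finset.mem_range.mp hk)
  have h1 : m + 1 - 1 - k = m - k := by omega
  rw [h1, Nat.sub_sub_self hk']
  ring

lemma geom_mul (α β : ℝ) :
    (PowerSeries.mk fun m => α ^ m : PowerSeries ℝ) * PowerSeries.mk (fun m => β ^ m)
      = PowerSeries.mk (aCoef α β) := by
  ext m
  rw [PowerSeries.coeff_mul, Finset.Nat.sum_antidiagonal_eq_sum_range_succ_mk]
  simp [aCoef]

lemma cconv (α β : ℝ) (m : ℕ) :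
    ∑ t ∈ range (m + 1), cCoef α β (m - t) * cCoef α β t = aCoef α β m := by
  have key : PowerSeries.mk (cCoef α β) * PowerSeries.mk (cCoef α β)
      = PowerSeries.mk (aCoef α β) := by
    rw [cps, ← geom_mul, ← rp_sq α, ← rp_sq β]; ring
  have := congrArg (PowerSeries.coeff (R := ℝ) m) key
  rw [PowerSeries.coeff_mul, Finset.Nat.sum_antidiagonal_eq_sum_range_succ_mk] at this
  simp only [PowerSeries.coeff_mk] at this
  rw [← this, ← Finset.sum_range_reflect (fun t => cCoef α β (m - t) * cCoef α β t) (m + 1)]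
  refine Finset.sum_congr rfl fun k hk => ?_
  have hk' : k ≤ m := Nat.lt_succ_iff.mp (Finset.mem_range.mp hk)
  have h1 : m + 1 - 1 - k = m - k := by omega
  rw [h1, Nat.sub_sub_self hk']


/-- the square root factorization `C_{α,β} · C_{α,β} = A_{α,β}`. -/
theorem square_root_factorization (n : ℕ) (hn : 1 ≤ n) (α β : ℝ)
    (hβ : 0 ≤ β) (hβα : β < α) (hα : α ≤ 1) :
    Cmat n α β * Cmat n α β = Amat n α β := by
  ext i j
  rw [Matrix.mul_apply]
  simp only [Cmat, Amat, Matrix.of_apply]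
  have hsum : ∑ k : Fin n,
      (if (k : ℕ) ≤ (i : ℕ) then cCoef α β ((i : ℕ) - k) else 0) *
        (if (j : ℕ) ≤ (k : ℕ) then cCoef α β ((k : ℕ) - j) else 0)
      = ∑ k ∈ range n,
      (if k ≤ (i : ℕ) then cCoef α β ((i : ℕ) - k) else 0) *
        (if (j : ℕ) ≤ k then cCoef α β (k - (j : ℕ)) else 0) :=
    Fin.sum_univ_eq_sum_range (fun k =>
      (if k ≤ (i : ℕ) then cCoef α β ((i : ℕ) - k) else 0) *
        (if (j : ℕ) ≤ k then cCoef α β (k - (j : ℕ)) else 0)) n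
  rw [hsum]
  by_cases h : (j : ℕ) ≤ (i : ℕ)
  · rw [if_pos h]
    have hsub : Finset.Icc (j : ℕ) (i : ℕ) ⊆ range n := by
      intro k hk
      rw [Finset.mem_Icc] at hk
      exact Finset.mem_range.mpr (lt_of_le_of_lt hk.2 i.isLt)
    rw [← Finset.sum_subset hsub (fun k _ hk => by
      rw [Finset.mem_Icc, not_and_or] at hk
      rcases hk with hk | hk
      · rw [if_neg hk, mul_zero]
      · rw [if_neg hk, zero_mul])]
    have heq : ∀ k ∈ Finset.Icc (j : ℕ) (i : ℕ),
        (if k ≤ (i : ℕ) then cCoef α β ((i : ℕ) - k) else 0) *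
          (if (j : ℕ) ≤ k then cCoef α β (k - (j : ℕ)) else 0)
        = cCoef α β ((i : ℕ) - k) * cCoef α β (k - (j : ℕ)) := by
      intro k hk
      rw [Finset.mem_Icc] at hk
      rw [if_pos hk.2, if_pos hk.1]
    rw [Finset.sum_congr rfl heq, ← Finset.Ico_add_one_right_eq_Icc, Finset.sum_Ico_eq_sum_range]
    have hr : (i : ℕ) + 1 - (j : ℕ) = ((i : ℕ) - (j : ℕ)) + 1 := by omega
    rw [hr, ← cconv α β ((i : ℕ) - (j : ℕ))]
    refine Finset.sum_congr rfl fun k hk => ?_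
    have h1 : (i : ℕ) - ((j : ℕ) + k) = (i : ℕ) - (j : ℕ) - k := by omega
    have h2 : (j : ℕ) + k - (j : ℕ) = k := by omega
    rw [h1, h2]
  · rw [if_neg h]
    refine Finset.sum_eq_zero fun k hk => ?_
    by_cases hk1 : k ≤ (i : ℕ)
    · rw [if_neg (show ¬ (j : ℕ) ≤ k by omega), mul_zero]
    · rw [if_neg hk1, zero_mul]
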